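/- If the step size satisfies 0 < η < 1/(L(1 + 2√p·s)), then ‖x(t+1) − x(t)‖ → 0 as t → ∞, and for every i ∈ {1, …, p}, ‖x(t) − x^i(t)‖ → 0 as t → ∞. -/

import Mathlib

open Filter Topology

section Aux

lemma descent_aux {E : Type*} [NormedAddCommGroup E] [InnerProductSpace ℝ E] [CompleteSpace E]
    (f : E → ℝ) (f' : E → E) (hf : ∀ y, HasGradientAt f (f' y) y)
    (L : ℝ) (hlip : ∀ y z, ‖f' y - f' z‖ ≤ L * ‖y - z‖) (x y : E) :
    f y ≤ f x + inner ℝ (f' x) (y - x) + L / 2 * ‖y - x‖ ^ 2 := by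
  set v := y - x with hv
  set φ : ℝ → ℝ := fun θ => f (x + θ • v) - θ * inner ℝ (f' x) v - L / 2 * θ ^ 2 * ‖v‖ ^ 2 with hφ
  have hline : ∀ θ : ℝ, HasDerivAt (fun θ : ℝ => x + θ • v) v θ := by
    intro θ
    simpa using ((hasDerivAt_id θ).smul_const v).const_add x
  have hder : ∀ θ : ℝ, HasDerivAt φ
      (inner ℝ (f' (x + θ • v)) v - inner ℝ (f' x) v - L * θ * ‖v‖ ^ 2) θ := by
    intro θ
    have h1 : HasDerivAt (fun θ : ℝ => f (x + θ • v)) (inner ℝ (f' (x + θ • v)) v) θ := by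
      have := (hf (x + θ • v)).hasFDerivAt.comp_hasDerivAt θ (hline θ)
      exact this
    have h2 : HasDerivAt (fun θ : ℝ => θ * inner ℝ (f' x) v) (inner ℝ (f' x) v) θ := by
      simpa using (hasDerivAt_id θ).mul_const (inner ℝ (f' x) v : ℝ)
    have h3 : HasDerivAt (fun θ : ℝ => L / 2 * θ ^ 2 * ‖v‖ ^ 2) (L * θ * ‖v‖ ^ 2) θ := by
      have h4 : HasDerivAt (fun θ : ℝ => θ ^ 2) (2 * θ) θ := by
        simpa using hasDerivAt_pow 2 θ
      have := (h4.const_mul (L / 2)).mul_const (‖v‖ ^ 2)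
      exact this.congr_deriv (by ring)
    exact (h1.sub h2).sub h3
  have hanti : AntitoneOn φ (Set.Icc (0:ℝ) 1) := by
    apply antitoneOn_of_deriv_nonpos (convex_Icc 0 1)
    · have : Differentiable ℝ φ := fun θ => (hder θ).differentiableAt
      exact this.continuous.continuousOn
    · intro θ hθ
      exact (hder θ).differentiableAt.differentiableWithinAt
    · intro θ hθ
      rw [(hder θ).deriv]
      have hθ0 : 0 ≤ θ := le_of_lt (by simpa using (Set.mem_Ioo.mp (by simpa using hθ)).1)
      have : inner ℝ (f' (x + θ • v)) v - inner ℝ (f' x) v ≤ L * θ * ‖v‖ ^ 2 := by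
        calc inner ℝ (f' (x + θ • v)) v - inner ℝ (f' x) v
            = inner ℝ (f' (x + θ • v) - f' x) v := by rw [inner_sub_left]
          _ ≤ ‖f' (x + θ • v) - f' x‖ * ‖v‖ := real_inner_le_norm _ _
          _ ≤ (L * ‖x + θ • v - x‖) * ‖v‖ := by
              have h5 := hlip (x + θ • v) x
              have h6 : (0:ℝ) ≤ ‖v‖ := norm_nonneg _
              nlinarith [norm_nonneg (f' (x + θ • v) - f' x)]
          _ = L * θ * ‖v‖ ^ 2 := by
              simp only [add_sub_cancel_left, norm_smul, Real.norm_eq_abs,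
                abs_of_nonneg hθ0]
              ring
      linarith
  have h01 := hanti (Set.mem_Icc.mpr ⟨le_refl 0, zero_le_one⟩)
      (Set.mem_Icc.mpr ⟨zero_le_one, le_refl 1⟩) zero_le_one
  simp only [hφ, one_smul, zero_smul, add_zero, one_pow, zero_pow, one_mul, zero_mul,
    two_ne_zero, Ne, not_false_iff, mul_zero, sub_zero] at h01
  have hxy : x + v = y := by rw [hv]; abel
  rw [hxy] at h01
  linarith

lemma ereal_coe_sum {α : Type*} (s : Finset α) (G : α → ℝ) :
    ((∑ i ∈ s, G i : ℝ) : EReal) = ∑ i ∈ s, ((G i : ℝ) : EReal) := by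
  induction s using Finset.cons_induction with
  | empty => simp
  | cons a t ha ih => rw [Finset.sum_cons, Finset.sum_cons, EReal.coe_add, ih]

lemma ereal_sum_ne_bot {α : Type*} (s : Finset α) (g : α → EReal) (hb : ∀ i, g i ≠ ⊥) :
    ∑ i ∈ s, g i ≠ ⊥ := by
  induction s using Finset.cons_induction with
  | empty => simp
  | cons a t ha ih =>
    rw [Finset.sum_cons]
    simp [EReal.add_eq_bot_iff, hb a, ih]

lemma ereal_sum_ne_top {α : Type*} (s : Finset α) (g : α → EReal) (hb : ∀ i, g i ≠ ⊥)
    (h : ∑ i ∈ s, g i ≠ ⊤) {i : α} (hi : i ∈ s) : g i ≠ ⊤ := by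
  classical
  intro htop
  apply h
  rw [← Finset.add_sum_erase _ _ hi, htop, EReal.top_add_of_ne_bot]
  exact ereal_sum_ne_bot _ _ hb

end Aux

noncomputable abbrev EE (p : ℕ) (d : Fin p → ℕ) : Type :=
  PiLp 2 (fun i : Fin p => EuclideanSpace ℝ (Fin (d i)))
theorem stmt_3
    (p s : ℕ) (hp : 1 ≤ p) (d : Fin p → ℕ) (hd : ∀ i, 1 ≤ d i)
    (τ : Fin p → Fin p → ℕ → ℕ)
    (hτ_le : ∀ i j t, τ i j t ≤ t)
    (hτ_ge : ∀ i j t, t ≤ τ i j t + s)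
    (hτ_self : ∀ i t, τ i i t = t)
    (x : (i : Fin p) → ℕ → EuclideanSpace ℝ (Fin (d i)))
    (X : ℕ → EE p d) (hX : ∀ t i, X t i = x i t)
    (Xl : Fin p → ℕ → EE p d) (hXl : ∀ i t j, Xl i t j = x j (τ i j t))
    (T : Fin p → Set ℕ)
    (hT : ∀ i t, ∃ k ∈ T i, t ≤ k ∧ k ≤ t + s)
    (η L : ℝ) (hη : 0 < η) (hL : 0 < L)
    (f : EE p d → ℝ) (f' : EE p d → EE p d)
    (hf : ∀ y, HasGradientAt f (f' y) y)
    (hlip : ∀ y z, ‖f' y - f' z‖ ≤ L * ‖y - z‖)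
    (g : (i : Fin p) → EuclideanSpace ℝ (Fin (d i)) → EReal)
    (hg_nebot : ∀ i z, g i z ≠ ⊥)
    (hg_proper : ∀ i, ∃ z, g i z ≠ ⊤)
    (hg_lsc : ∀ i, LowerSemicontinuous (g i))
    (F : EE p d → EReal)
    (hF : ∀ y, F y = (f y : EReal) + ∑ i, g i (y i))
    (hF_bdd : ∃ m : ℝ, ∀ y, (m : EReal) ≤ F y)
    (hF0 : F (X 0) < ⊤)
    (hskip : ∀ i t, t ∉ T i → x i (t + 1) = x i t)
    (hupd : ∀ i t, t ∈ T i → ∀ z : EuclideanSpace ℝ (Fin (d i)),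
      g i (x i (t + 1)) +
        ((1 / (2 * η) * ‖x i (t + 1) - (x i t - η • f' (Xl i t) i)‖ ^ 2 : ℝ) : EReal)
      ≤ g i z + ((1 / (2 * η) * ‖z - (x i t - η • f' (Xl i t) i)‖ ^ 2 : ℝ) : EReal))
    (hstep : η < 1 / (L * (1 + 2 * Real.sqrt p * s))) :
    Tendsto (fun t => ‖X (t + 1) - X t‖) atTop (𝓝 0) ∧
    ∀ i : Fin p, Tendsto (fun t => ‖X t - Xl i t‖) atTop (𝓝 0) := by
  classical
  obtain ⟨m, hm⟩ := hF_bdd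
  have hsp : (0:ℝ) ≤ Real.sqrt p := Real.sqrt_nonneg _
  set Δ : ℕ → ℝ := fun t => ‖X (t + 1) - X t‖ with hΔdef
  have hΔ0 : ∀ t, 0 ≤ Δ t := fun t => norm_nonneg _
  set a : ℕ → ℝ := fun t => Δ t ^ 2 with hadef
  have ha0 : ∀ t, 0 ≤ a t := fun t => sq_nonneg _
  have hXsub : ∀ t (j : Fin p), (X (t+1) - X t) j = x j (t+1) - x j t := by
    intro t j
    show X (t+1) j - X t j = _
    rw [hX, hX]
  have hasum : ∀ t, a t = ∑ j, ‖x j (t+1) - x j t‖ ^ 2 := by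
    intro t
    show ‖X (t+1) - X t‖ ^ 2 = _
    rw [PiLp.norm_sq_eq_of_L2]
    exact Finset.sum_congr rfl fun j _ => by rw [hXsub]
  -- finiteness of g along the iterates
  have hfin : ∀ t i, g i (x i t) ≠ ⊤ := by
    intro t
    induction t with
    | zero =>
      intro i
      have h0 : ((f (X 0) : ℝ) : EReal) + ∑ j, g j (X 0 j) ≠ ⊤ := by
        rw [← hF]; exact hF0.ne
      have hsum : ∑ j, g j (X 0 j) ≠ ⊤ := by
        intro hs
        rw [hs, EReal.coe_add_top] at h0
        exact h0 rfl
      have h5 := ereal_sum_ne_top Finset.univ (fun j => g j (X 0 j))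
        (fun j => by show g j (X 0 j) ≠ ⊥; rw [hX]; exact hg_nebot j _)
        hsum (Finset.mem_univ i)
      show g i (x i 0) ≠ ⊤
      rw [← hX 0 i]
      exact h5
    | succ t ih =>
      intro i
      by_cases hti : t ∈ T i
      · have h := hupd i t hti (x i t)
        intro htop
        rw [htop, EReal.top_add_coe] at h
        rw [← EReal.coe_toReal (ih i) (hg_nebot i _), ← EReal.coe_add] at h
        exact (EReal.coe_lt_top _).not_ge h
      · rw [hskip i t hti]; exact ih i
  set G : Fin p → ℕ → ℝ := fun i t => (g i (x i t)).toReal with hGdef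
  have hG : ∀ i t, g i (x i t) = ((G i t : ℝ) : EReal) :=
    fun i t => (EReal.coe_toReal (hfin t i) (hg_nebot i _)).symm
  -- per-block prox inequality, real form
  have hkey : ∀ i t, G i (t+1) + 1/(2*η) * ‖x i (t+1) - x i t‖^2
      + (inner ℝ (x i (t+1) - x i t) (f' (Xl i t) i) : ℝ) ≤ G i t := by
    intro i t
    by_cases hti : t ∈ T i
    · have h := hupd i t hti (x i t)
      rw [hG i (t+1), hG i t, ← EReal.coe_add, ← EReal.coe_add, EReal.coe_le_coe_iff] at h
      have e1 : x i (t+1) - (x i t - η • f' (Xl i t) i)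
          = (x i (t+1) - x i t) + η • f' (Xl i t) i := by abel
      have e2 : x i t - (x i t - η • f' (Xl i t) i) = η • f' (Xl i t) i := by abel
      rw [e1, e2, norm_add_sq_real, real_inner_smul_right] at h
      have e3 : 1/(2*η) * (2 * (η * (inner ℝ (x i (t+1) - x i t) (f' (Xl i t) i) : ℝ)))
          = (inner ℝ (x i (t+1) - x i t) (f' (Xl i t) i) : ℝ) := by
        field_simp
      rw [mul_add, mul_add, e3] at h
      linarith [h]
    · have hx' : x i (t+1) = x i t := hskip i t hti
      have hGe : G i (t+1) = G i t := by rw [hGdef]; simp only [hx']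
      rw [hGe, hx', sub_self]
      simp
  set Gs : ℕ → ℝ := fun t => ∑ i, G i t with hGsdef
  set Φ : ℕ → ℝ := fun t => f (X t) + Gs t with hΦdef
  have hsumkey : ∀ t, Gs (t+1) + 1/(2*η) * a t
      + ∑ i, (inner ℝ (x i (t+1) - x i t) (f' (Xl i t) i) : ℝ) ≤ Gs t := by
    intro t
    have h := Finset.sum_le_sum (fun i (_ : i ∈ Finset.univ) => hkey i t)
    rw [Finset.sum_add_distrib, Finset.sum_add_distrib, ← Finset.mul_sum, ← hasum t] at h
    exact h
  -- norm component bounds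
  have hcomp_le : ∀ (v w : EE p d), (∀ j, ‖v j‖ ≤ ‖w j‖) → ‖v‖ ≤ ‖w‖ := by
    intro v w h
    rw [PiLp.norm_eq_of_L2, PiLp.norm_eq_of_L2]
    apply Real.sqrt_le_sqrt
    exact Finset.sum_le_sum fun j _ => pow_le_pow_left₀ (norm_nonneg _) (h j) 2
  have hcomp1 : ∀ (v : EE p d) (j : Fin p), ‖v j‖ ≤ ‖v‖ := by
    intro v j
    have h1 : ‖v j‖^2 ≤ ∑ k, ‖v k‖^2 :=
      Finset.single_le_sum (f := fun k => ‖v k‖^2) (fun k _ => sq_nonneg _) (Finset.mem_univ j)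
    rw [PiLp.norm_eq_of_L2 v, ← Real.sqrt_sq (norm_nonneg (v j))]
    exact Real.sqrt_le_sqrt h1
  set S : ℕ → ℝ := fun t => ∑ r ∈ Finset.Ico (t - s) t, Δ r with hSdef
  have hS0 : ∀ t, 0 ≤ S t := fun t => Finset.sum_nonneg fun r _ => hΔ0 r
  -- lag bound
  have hlag : ∀ (i : Fin p) t, ‖X t - Xl i t‖ ≤ S t := by
    intro i t
    set P : ℕ → EE p d := fun r =>
      (WithLp.equiv 2 _).symm (fun j => x j (max (min r t) (τ i j t))) with hPdef
    have hPapp : ∀ r j, P r j = x j (max (min r t) (τ i j t)) := fun r j => rfl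
    have htel : ∑ r ∈ Finset.Ico (t - s) t, (P (r+1) - P r) = P t - P (t - s) := by
      rw [Finset.sum_Ico_eq_sub _ (Nat.sub_le t s), Finset.sum_range_sub, Finset.sum_range_sub]
      abel
    have hPt : P t = X t := by
      refine PiLp.ext fun j => ?_
      rw [hPapp, hX]
      congr 1
      rw [Nat.min_self, Nat.max_eq_left (hτ_le i j t)]
    have hPs : P (t - s) = Xl i t := by
      refine PiLp.ext fun j => ?_
      rw [hPapp, hXl]
      congr 1
      have h2 := hτ_ge i j t
      rw [Nat.min_eq_left (Nat.sub_le t s), Nat.max_eq_right (by omega : t - s ≤ τ i j t)]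
    have hXt : X t - Xl i t = ∑ r ∈ Finset.Ico (t - s) t, (P (r+1) - P r) := by
      rw [htel, hPt, hPs]
    rw [hXt]
    refine le_trans (norm_sum_le _ _) (Finset.sum_le_sum ?_)
    intro r hr
    rw [Finset.mem_Ico] at hr
    apply hcomp_le
    intro j
    have happ : (P (r+1) - P r) j = P (r+1) j - P r j := rfl
    rw [happ, hPapp, hPapp, hXsub r j]
    rcases le_or_gt (τ i j t) r with hc | hc
    · have e1 : max (min (r+1) t) (τ i j t) = r+1 := by
        rw [Nat.min_eq_left (by omega : r + 1 ≤ t), Nat.max_eq_left (by omega : τ i j t ≤ r + 1)]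
      have e2 : max (min r t) (τ i j t) = r := by
        rw [Nat.min_eq_left (by omega : r ≤ t), Nat.max_eq_left hc]
      rw [e1, e2]
    · have e1 : max (min (r+1) t) (τ i j t) = τ i j t := by
        rw [Nat.min_eq_left (by omega : r + 1 ≤ t), Nat.max_eq_right (by omega : r + 1 ≤ τ i j t)]
      have e2 : max (min r t) (τ i j t) = τ i j t := by
        rw [Nat.min_eq_left (by omega : r ≤ t), Nat.max_eq_right (by omega : r ≤ τ i j t)]
      rw [e1, e2, sub_self]
      simpa using norm_nonneg _
  -- sum of block norms vs sqrt p
  have hsum_norm : ∀ t, ∑ i, ‖x i (t+1) - x i t‖ ≤ Real.sqrt p * Δ t := by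
    intro t
    have h1 : (∑ i, ‖x i (t+1) - x i t‖)^2 ≤ (p : ℝ) * ∑ i, ‖x i (t+1) - x i t‖^2 := by
      have := sq_sum_le_card_mul_sum_sq (s := (Finset.univ : Finset (Fin p)))
        (f := fun i => ‖x i (t+1) - x i t‖)
      simpa using this
    have h2 : (∑ i, ‖x i (t+1) - x i t‖)^2 ≤ (Real.sqrt p * Δ t)^2 := by
      rw [mul_pow, Real.sq_sqrt (Nat.cast_nonneg p)]
      rw [← hasum t] at h1
      simpa [hadef] using h1
    have h3 : 0 ≤ ∑ i, ‖x i (t+1) - x i t‖ := Finset.sum_nonneg fun i _ => norm_nonneg _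
    have h4 : 0 ≤ Real.sqrt p * Δ t := mul_nonneg hsp (hΔ0 t)
    nlinarith [h2, h3, h4]
  -- main one-step inequality
  have hmain : ∀ t, Φ (t+1) + (1/(2*η) - L/2 - L * Real.sqrt p * s / 2) * a t
      ≤ Φ t + (L * Real.sqrt p / 2) * ∑ r ∈ Finset.Ico (t - s) t, a r := by
    intro t
    have hdesc := descent_aux f f' hf L hlip (X t) (X (t+1))
    have hinner : (inner ℝ (f' (X t)) (X (t+1) - X t) : ℝ)
        = ∑ i, (inner ℝ (f' (X t) i) (x i (t+1) - x i t) : ℝ) := by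
      rw [PiLp.inner_apply]
      exact Finset.sum_congr rfl fun i _ => by rw [hXsub]
    have hcross : ∑ i, ((inner ℝ (f' (X t) i) (x i (t+1) - x i t) : ℝ)
        - (inner ℝ (x i (t+1) - x i t) (f' (Xl i t) i) : ℝ))
        ≤ L * Real.sqrt p * Δ t * S t := by
      have hterm : ∀ i : Fin p, (inner ℝ (f' (X t) i) (x i (t+1) - x i t) : ℝ)
          - (inner ℝ (x i (t+1) - x i t) (f' (Xl i t) i) : ℝ)
          ≤ ‖x i (t+1) - x i t‖ * (L * S t) := by
        intro i
        have e : (inner ℝ (f' (X t) i) (x i (t+1) - x i t) : ℝ)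
            - (inner ℝ (x i (t+1) - x i t) (f' (Xl i t) i) : ℝ)
            = (inner ℝ (x i (t+1) - x i t) ((f' (X t) - f' (Xl i t)) i) : ℝ) := by
          have happ : (f' (X t) - f' (Xl i t)) i = f' (X t) i - f' (Xl i t) i := rfl
          simp only [happ, inner_sub_left, inner_sub_right]
          all_goals rw [real_inner_comm (f' (X t) i) (x i (t+1)),
            real_inner_comm (f' (X t) i) (x i t)]
          all_goals ring
        rw [e]
        calc (inner ℝ (x i (t+1) - x i t) ((f' (X t) - f' (Xl i t)) i) : ℝ)
            ≤ ‖x i (t+1) - x i t‖ * ‖(f' (X t) - f' (Xl i t)) i‖ := real_inner_le_norm _ _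
          _ ≤ ‖x i (t+1) - x i t‖ * (L * S t) := by
              apply mul_le_mul_of_nonneg_left _ (norm_nonneg _)
              calc ‖(f' (X t) - f' (Xl i t)) i‖ ≤ ‖f' (X t) - f' (Xl i t)‖ := hcomp1 _ i
                _ ≤ L * ‖X t - Xl i t‖ := hlip _ _
                _ ≤ L * S t := mul_le_mul_of_nonneg_left (hlag i t) hL.le
      calc ∑ i, ((inner ℝ (f' (X t) i) (x i (t+1) - x i t) : ℝ)
            - (inner ℝ (x i (t+1) - x i t) (f' (Xl i t) i) : ℝ))
          ≤ ∑ i, ‖x i (t+1) - x i t‖ * (L * S t) :=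
            Finset.sum_le_sum fun i _ => hterm i
        _ = (∑ i, ‖x i (t+1) - x i t‖) * (L * S t) := by rw [Finset.sum_mul]
        _ ≤ (Real.sqrt p * Δ t) * (L * S t) := by
            apply mul_le_mul_of_nonneg_right (hsum_norm t)
            exact mul_nonneg hL.le (hS0 t)
        _ = L * Real.sqrt p * Δ t * S t := by ring
    have hquad : Δ t * S t ≤ ((s : ℝ) * a t + ∑ r ∈ Finset.Ico (t - s) t, a r) / 2 := by
      have hc : ∀ r ∈ Finset.Ico (t - s) t, Δ t * Δ r ≤ (a t + a r) / 2 := by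
        intro r _
        have := sq_nonneg (Δ t - Δ r)
        simp only [hadef]
        nlinarith
      calc Δ t * S t = ∑ r ∈ Finset.Ico (t - s) t, Δ t * Δ r := Finset.mul_sum _ _ _
        _ ≤ ∑ r ∈ Finset.Ico (t - s) t, (a t + a r) / 2 := Finset.sum_le_sum hc
        _ = (((Finset.Ico (t - s) t).card : ℝ) * a t + ∑ r ∈ Finset.Ico (t - s) t, a r) / 2 := by
            rw [← Finset.sum_div, Finset.sum_add_distrib, Finset.sum_const, nsmul_eq_mul]
        _ ≤ ((s : ℝ) * a t + ∑ r ∈ Finset.Ico (t - s) t, a r) / 2 := by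
            have hcard : ((Finset.Ico (t - s) t).card : ℝ) ≤ (s : ℝ) := by
              rw [Nat.card_Ico]
              exact_mod_cast (by omega : t - (t - s) ≤ s)
            have := mul_le_mul_of_nonneg_right hcard (ha0 t)
            linarith
    have hsk := hsumkey t
    have hLsp : (0:ℝ) ≤ L * Real.sqrt p := mul_nonneg hL.le hsp
    have hfull : L * Real.sqrt p * Δ t * S t
        ≤ L * Real.sqrt p * (((s : ℝ) * a t + ∑ r ∈ Finset.Ico (t - s) t, a r) / 2) := by
      have := mul_le_mul_of_nonneg_left hquad hLsp
      calc L * Real.sqrt p * Δ t * S t = L * Real.sqrt p * (Δ t * S t) := by ring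
        _ ≤ _ := this
    rw [hinner] at hdesc
    have haeq : ‖X (t+1) - X t‖ ^ 2 = a t := rfl
    rw [haeq] at hdesc
    simp only [hΦdef]
    have hexpand : L * Real.sqrt p * (((s : ℝ) * a t + ∑ r ∈ Finset.Ico (t - s) t, a r) / 2)
        = L * Real.sqrt p * s / 2 * a t
          + L * Real.sqrt p / 2 * ∑ r ∈ Finset.Ico (t - s) t, a r := by ring
    have hsplit : ∑ i, ((inner ℝ (f' (X t) i) (x i (t+1) - x i t) : ℝ)
        - (inner ℝ (x i (t+1) - x i t) (f' (Xl i t) i) : ℝ))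
        = ∑ i, (inner ℝ (f' (X t) i) (x i (t+1) - x i t) : ℝ)
          - ∑ i, (inner ℝ (x i (t+1) - x i t) (f' (Xl i t) i) : ℝ) :=
      Finset.sum_sub_distrib _ _
    linarith [hcross, hfull]
  -- positivity of the effective constant
  set c0 : ℝ := 1/(2*η) - L/2 - L * Real.sqrt p * s with hc0def
  have hc0 : 0 < c0 := by
    have hK : 0 < L * (1 + 2 * Real.sqrt p * s) := by positivity
    have h1 : L * (1 + 2 * Real.sqrt p * s) < 1/η := by
      rw [lt_div_iff₀ hη]
      have h2 := (lt_div_iff₀ hK).mp hstep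
      linarith
    have h3 : 1/(2*η) = (1/η)/2 := by ring
    rw [hc0def, h3]
    linarith
  -- telescoping
  have htele : ∀ N, Φ N + c0 * ∑ t ∈ Finset.range N, a t ≤ Φ 0 := by
    intro N
    set c1 : ℝ := 1/(2*η) - L/2 - L * Real.sqrt p * s / 2 with hc1def
    have step1 : Φ N + c1 * ∑ t ∈ Finset.range N, a t
        ≤ Φ 0 + (L * Real.sqrt p / 2)
          * ∑ t ∈ Finset.range N, ∑ r ∈ Finset.Ico (t - s) t, a r := by
      induction N with
      | zero => simp
      | succ N ih =>
        rw [Finset.sum_range_succ, Finset.sum_range_succ]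
        have h := hmain N
        have e1 : c1 * (∑ t ∈ Finset.range N, a t + a N)
            = c1 * ∑ t ∈ Finset.range N, a t + c1 * a N := by ring
        have e2 : (L * Real.sqrt p / 2) * (∑ t ∈ Finset.range N, ∑ r ∈ Finset.Ico (t - s) t, a r
            + ∑ r ∈ Finset.Ico (N - s) N, a r)
            = (L * Real.sqrt p / 2) * ∑ t ∈ Finset.range N, ∑ r ∈ Finset.Ico (t - s) t, a r
            + (L * Real.sqrt p / 2) * ∑ r ∈ Finset.Ico (N - s) N, a r := by ring
        rw [e1, e2]
        linarith
    have step2 : ∑ t ∈ Finset.range N, ∑ r ∈ Finset.Ico (t - s) t, a r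
        ≤ (s : ℝ) * ∑ r ∈ Finset.range N, a r := by
      calc ∑ t ∈ Finset.range N, ∑ r ∈ Finset.Ico (t - s) t, a r
          = ∑ t ∈ Finset.range N, ∑ r ∈ Finset.range N,
              if r ∈ Finset.Ico (t - s) t then a r else 0 := by
            refine Finset.sum_congr rfl fun t ht => ?_
            rw [Finset.sum_ite_mem]
            congr 1
            refine (Finset.inter_eq_right.mpr ?_).symm
            intro r hr
            rw [Finset.mem_Ico] at hr
            rw [Finset.mem_range] at ht ⊢
            omega
        _ = ∑ r ∈ Finset.range N, ∑ t ∈ Finset.range N,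
              if r ∈ Finset.Ico (t - s) t then a r else 0 := Finset.sum_comm
        _ ≤ ∑ r ∈ Finset.range N, (s : ℝ) * a r := by
            refine Finset.sum_le_sum fun r _ => ?_
            rw [Finset.sum_ite, Finset.sum_const, Finset.sum_const_zero, add_zero, nsmul_eq_mul]
            have hsub : (Finset.range N).filter (fun t => r ∈ Finset.Ico (t - s) t)
                ⊆ Finset.Ioc r (r + s) := by
              intro t ht
              rw [Finset.mem_filter, Finset.mem_Ico] at ht
              rw [Finset.mem_Ioc]
              omega
            have hcard : (((Finset.range N).filter
                (fun t => r ∈ Finset.Ico (t - s) t)).card : ℝ) ≤ (s : ℝ) := by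
              have := Finset.card_le_card hsub
              rw [Nat.card_Ioc] at this
              exact_mod_cast (by omega : ((Finset.range N).filter
                (fun t => r ∈ Finset.Ico (t - s) t)).card ≤ s)
            exact mul_le_mul_of_nonneg_right hcard (ha0 r)
        _ = (s : ℝ) * ∑ r ∈ Finset.range N, a r := (Finset.mul_sum _ _ _).symm
    have hLsp2 : (0:ℝ) ≤ L * Real.sqrt p / 2 := by positivity
    have h4 := mul_le_mul_of_nonneg_left step2 hLsp2
    have h5 := step1
    have e3 : c0 = c1 - L * Real.sqrt p * s / 2 := by rw [hc0def, hc1def]; ring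
    have e4 : (L * Real.sqrt p / 2) * ((s : ℝ) * ∑ r ∈ Finset.range N, a r)
        = (L * Real.sqrt p * s / 2) * ∑ r ∈ Finset.range N, a r := by ring
    rw [e4] at h4
    rw [e3, sub_mul]
    linarith [h4, h5]
  -- lower bound on Φ
  have hΦlow : ∀ t, m ≤ Φ t := by
    intro t
    have h := hm (X t)
    rw [hF] at h
    have e1 : ∑ i, g i (X t i) = ((Gs t : ℝ) : EReal) := by
      rw [hGsdef]
      rw [ereal_coe_sum]
      exact Finset.sum_congr rfl fun i _ => by rw [hX, hG]
    rw [e1, ← EReal.coe_add, EReal.coe_le_coe_iff] at h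
    exact h
  -- summability and limits
  have hbdd : ∀ N, ∑ t ∈ Finset.range N, a t ≤ (Φ 0 - m)/c0 := by
    intro N
    have h1 := htele N
    have h2 := hΦlow N
    rw [le_div_iff₀ hc0]
    nlinarith
  have hsummable : Summable a := summable_of_sum_range_le ha0 hbdd
  have haz : Tendsto a atTop (𝓝 0) := hsummable.tendsto_atTop_zero
  have hΔz : Tendsto Δ atTop (𝓝 0) := by
    have h1 := haz.sqrt
    rw [Real.sqrt_zero] at h1
    have h2 : (fun t => Real.sqrt (a t)) = Δ := by
      funext t
      exact Real.sqrt_sq (hΔ0 t)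
    rwa [h2] at h1
  refine ⟨hΔz, ?_⟩
  intro i
  have hSz : Tendsto S atTop (𝓝 0) := by
    have hEq : ∀ t, s ≤ t → S t = ∑ k ∈ Finset.range s, Δ (t - s + k) := by
      intro t ht
      rw [hSdef]
      simp only
      rw [Finset.sum_Ico_eq_sum_range]
      have e : t - (t - s) = s := by omega
      rw [e]
    have h2 : Tendsto (fun t => ∑ k ∈ Finset.range s, Δ (t - s + k)) atTop (𝓝 0) := by
      have hterm : ∀ k : ℕ, Tendsto (fun t : ℕ => Δ (t - s + k)) atTop (𝓝 0) := by
        intro k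
        exact hΔz.comp ((tendsto_add_atTop_nat k).comp (tendsto_sub_atTop_nat s))
      have := tendsto_finset_sum (Finset.range s) fun k _ => hterm k
      simpa using this
    exact h2.congr' (by filter_upwards [eventually_ge_atTop s] with t ht using (hEq t ht).symm)
  exact squeeze_zero (fun t => norm_nonneg _) (fun t => hlag i t) hSz
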